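/- If c is a symmetric r×r matrix such that c y² + y² c = 2 y c y for all symmetric positive definite matrices y, then c commutes with every symmetric positive definite matrix and hence c is a scalar multiple of the identity. -/

import Mathlib

open Matrix in

theorem symm_comm_scalar {r : ℕ} (c : Matrix (Fin r) (Fin r) ℝ) (hc : c.IsSymm)
    (h : ∀ y : Matrix (Fin r) (Fin r) ℝ, y.PosDef →
      c * (y * y) + (y * y) * c = (2 : ℝ) • (y * c * y)) :
    (∀ y : Matrix (Fin r) (Fin r) ℝ, y.PosDef → c * y = y * c) ∧
    ∃ κ : ℝ, c = κ • (1 : Matrix (Fin r) (Fin r) ℝ) := by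
  have comm : ∀ y : Matrix (Fin r) (Fin r) ℝ, y.PosDef → c * y = y * c := by
    intro y hy
    have hyT : yᵀ = y := by
      have := hy.isHermitian
      simpa [Matrix.IsHermitian, Matrix.conjTranspose_eq_transpose_of_trivial] using this
    have hcT : cᵀ = c := hc
    set A := c * y - y * c with hA
    have hAT : Aᵀ = y * c - c * y := by
      simp [hA, Matrix.transpose_sub, Matrix.transpose_mul, hyT, hcT]
    have e : Matrix.trace ((c * (y*y) + (y*y) * c) * c)
        = Matrix.trace (((2:ℝ) • (y * c * y)) * c) := by rw [h y hy]
    have key : Matrix.trace (A * Aᵀ) = 0 := by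
      rw [hAT, hA]
      simp only [Matrix.sub_mul, Matrix.mul_sub, Matrix.trace_sub, Matrix.add_mul,
        Matrix.trace_add, Matrix.smul_mul, Matrix.trace_smul, smul_eq_mul, mul_assoc] at e ⊢
      have r1 : Matrix.trace (c * (y * (c * y))) = Matrix.trace (y * (c * (y * c))) := by
        rw [Matrix.trace_mul_comm c (y * (c * y))]; simp [mul_assoc]
      have r2 : Matrix.trace (y * (y * (c * c))) = Matrix.trace (y * (c * (c * y))) := by
        rw [Matrix.trace_mul_comm y (y * (c * c))]; simp [mul_assoc]
      linarith [e, r1, r2]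
    have hsum : ∑ i, ∑ j, (A i j)^2 = 0 := by
      rw [← key]
      simp [Matrix.trace, Matrix.mul_apply, Matrix.diag, sq]
    have hAzero : A = 0 := by
      ext i j
      have h1 : ∀ i ∈ Finset.univ, (0:ℝ) ≤ ∑ j, (A i j)^2 :=
        fun i _ => Finset.sum_nonneg fun j _ => sq_nonneg _
      have h2 := (Finset.sum_eq_zero_iff_of_nonneg h1).mp hsum i (Finset.mem_univ i)
      have h3 := (Finset.sum_eq_zero_iff_of_nonneg
        (fun j _ => sq_nonneg (A i j))).mp h2 j (Finset.mem_univ j)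
      have := pow_eq_zero_iff (n := 2) (by norm_num) |>.mp h3
      simpa using this
    have := sub_eq_zero.mp hAzero
    exact this
  refine ⟨comm, ?_⟩
  -- off-diagonal entries vanish
  have offdiag : ∀ i j : Fin r, i ≠ j → c i j = 0 := by
    intro i j hij
    set d : Fin r → ℝ := fun k => if k = i then 2 else 1 with hd
    have hpd : (Matrix.diagonal d).PosDef := by
      apply Matrix.PosDef.diagonal
      intro k; simp only [hd]; split_ifs <;> norm_num
    have hcomm := comm _ hpd
    have := congrFun (congrFun hcomm i) j
    rw [Matrix.mul_diagonal, Matrix.diagonal_mul] at this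
    simp only [hd] at this
    rw [if_neg (by exact Ne.symm hij)] at this
    norm_num at this
    linarith
  rcases Nat.eq_zero_or_pos r with hr | hr
  · subst hr
    exact ⟨0, by ext i; exact i.elim0⟩
  · set i0 : Fin r := ⟨0, hr⟩
    refine ⟨c i0 i0, ?_⟩
    have diageq : ∀ i j : Fin r, i ≠ j → c i i = c j j := by
      intro i j hij
      set E : Matrix (Fin r) (Fin r) ℝ :=
        Matrix.single i j 1 + Matrix.single j i 1 with hE
      set y : Matrix (Fin r) (Fin r) ℝ := (2:ℝ) • 1 + E with hy
      have hypd : y.PosDef := by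
        rw [Matrix.posDef_iff_dotProduct_mulVec]
        constructor
        · show yᴴ = y
          have hT : yᵀ = y := by
            ext a b
            simp only [hy, hE, Matrix.transpose_apply, Matrix.add_apply, Matrix.smul_apply,
              Matrix.one_apply, Matrix.single, Matrix.of_apply, smul_eq_mul]
            by_cases hab : a = b <;> by_cases hai : a = i <;> by_cases hbj : b = j <;>
              by_cases haj : a = j <;> by_cases hbi : b = i <;> simp_all [eq_comm]
          rw [show yᴴ = yᵀ from by ext a b; simp [Matrix.conjTranspose_apply], hT]
        · intro x hx
          have hmv : y *ᵥ x = (2:ℝ) • x + (Function.update (0 : Fin r → ℝ) i (1 * x j))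
              + (Function.update (0 : Fin r → ℝ) j (1 * x i)) := by
            simp [hy, hE, Matrix.add_mulVec, Matrix.smul_mulVec,
              Matrix.single_mulVec, Matrix.one_mulVec]
            abel
          have hform : star x ⬝ᵥ y *ᵥ x = 2 * (∑ k, x k * x k) + x i * x j + x j * x i := by
            rw [hmv]
            simp only [star_trivial, dotProduct_add, dotProduct_smul, smul_eq_mul, one_mul]
            have d1 : x ⬝ᵥ Function.update (0 : Fin r → ℝ) i (x j) = x i * x j := by
              simp [dotProduct, Function.update, Finset.sum_ite_eq']
            have d2 : x ⬝ᵥ Function.update (0 : Fin r → ℝ) j (x i) = x j * x i := by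
              simp [dotProduct, Function.update, Finset.sum_ite_eq']
            rw [d1, d2]
            simp [dotProduct]
          rw [hform]
          obtain ⟨k0, hk0⟩ := Function.ne_iff.mp hx
          have hS : 0 < ∑ k, x k * x k := by
            apply Finset.sum_pos' (fun k _ => mul_self_nonneg _)
            exact ⟨k0, Finset.mem_univ k0, mul_self_pos.mpr hk0⟩
          have hsub : x i * x i + x j * x j ≤ ∑ k, x k * x k := by
            have := Finset.sum_le_univ_sum_of_nonneg (s := {i, j})
              (f := fun k => x k * x k) (fun k => mul_self_nonneg _)
            rwa [Finset.sum_pair hij] at this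
          nlinarith [sq_nonneg (x i + x j)]
      have hcomm := comm y hypd
      have := congrFun (congrFun hcomm i) j
      simp only [hy, hE, Matrix.mul_add, Matrix.add_mul, Matrix.mul_smul, Matrix.smul_mul,
        Matrix.mul_one, Matrix.one_mul, Matrix.add_apply, Matrix.smul_apply, smul_eq_mul] at this
      rw [Matrix.single_mul_apply_of_ne (h := hij)] at this
      rw [Matrix.mul_single_apply_same] at this
      rw [Matrix.mul_single_apply_of_ne (hbj := hij.symm)] at this
      rw [Matrix.single_mul_apply_same] at this
      linarith
    ext i j
    by_cases hij : i = j
    · subst hij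
      by_cases h0 : i = i0
      · subst h0; simp
      · have := diageq i i0 h0
        simp [this, Matrix.one_apply]
    · simp [Matrix.one_apply, hij, offdiag i j hij]
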